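/- Let T > 0, n ∈ ℕ, p ∈ [1,∞) and σ > 0. Let D ⊆ L^p((0,T);ℝⁿ) be a nonempty set such that (D1) every u ∈ D has a representative v : (0,T) → ℝⁿ with v(t) ∈ {0,1}ⁿ for all t ∈ (0,T) and Σ_{j=1}^n Var(v_j;(0,T)) ≤ σ, where Var denotes the pointwise total variation (supremum over finite partitions), and (D2) D is closed in L^p((0,T);ℝⁿ). Then every lower semicontinuous function f : L^p((0,T);ℝⁿ) → ℝ attains a global minimum over D, i.e., there exists u* ∈ D with f(u*) ≤ f(u) for all u ∈ D. -/

import Mathlib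

open MeasureTheory Set Filter
open scoped ENNReal

lemma lsc_exists_min {X : Type*} [TopologicalSpace X] [T2Space X] {D : Set X}
    (hD : IsCompact D) (hne : D.Nonempty) {f : X → ℝ} (hf : LowerSemicontinuous f) :
    ∃ u ∈ D, ∀ w ∈ D, f u ≤ f w := by
  haveI : Nonempty D := hne.to_subtype
  set K : D → Set X := fun w => D ∩ f ⁻¹' Iic (f w) with hK
  have hcl : ∀ w : D, IsClosed (K w) := fun w =>
    hD.isClosed.inter (hf.isClosed_preimage _)
  have hcomp : ∀ w : D, IsCompact (K w) := fun w =>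
    (hD.of_isClosed_subset (hcl w) inter_subset_left)
  have hdir : Directed (· ⊇ ·) K := by
    intro w1 w2
    rcases le_total (f w1) (f w2) with h | h
    · exact ⟨w1, le_refl _, inter_subset_inter_right _ (preimage_mono (Iic_subset_Iic.2 h))⟩
    · exact ⟨w2, inter_subset_inter_right _ (preimage_mono (Iic_subset_Iic.2 h)), le_refl _⟩
  obtain ⟨u, hu⟩ :=
    IsCompact.nonempty_iInter_of_directed_nonempty_isCompact_isClosed K hdir
      (fun w => ⟨w, w.2, mem_preimage.2 (mem_Iic.2 le_rfl)⟩) hcomp hcl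
  have hu' := mem_iInter.1 hu
  exact ⟨u, (hu' ⟨hne.some, hne.some_mem⟩).1, fun w hw => (hu' ⟨w, hw⟩).2⟩

lemma aux_tb
    (T : ℝ) (hT : 0 < T) (n : ℕ) (p : ℝ≥0∞) [Fact (1 ≤ p)] (hp : p ≠ ⊤)
    (σ : ℝ) (hσ : 0 < σ)
    (D : Set (Lp (Fin n → ℝ) p (volume.restrict (Ioo (0:ℝ) T))))
    (hD1 : ∀ u ∈ D, ∃ v : ℝ → Fin n → ℝ,
      ((u : ℝ → Fin n → ℝ) =ᵐ[volume.restrict (Ioo (0:ℝ) T)] v) ∧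
      (∀ t ∈ Ioo (0:ℝ) T, ∀ j, v t j = 0 ∨ v t j = 1) ∧
      (∑ j : Fin n, eVariationOn (fun s => v s j) (Ioo (0:ℝ) T)) ≤ ENNReal.ofReal σ) :
    TotallyBounded D := by
  classical
  set μ : Measure ℝ := volume.restrict (Ioo (0:ℝ) T) with hμ
  haveI : IsFiniteMeasure μ := by
    constructor
    rw [hμ, Measure.restrict_apply_univ, Real.volume_Ioo]
    exact ENNReal.ofReal_lt_top
  have hp1 : (1:ℝ≥0∞) ≤ p := Fact.out
  have hp0 : p ≠ 0 := (zero_lt_one.trans_le hp1).ne'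
  set pr := p.toReal with hprdef
  have hpr : 0 < pr := ENNReal.toReal_pos hp0 hp
  rw [Metric.totallyBounded_iff]
  intro ε hε
  have hεpr : 0 < ε ^ pr := Real.rpow_pos_of_pos hε pr
  obtain ⟨N, hN⟩ := exists_nat_gt (max 1 (σ * T / ε ^ pr))
  have hN1 : (1:ℝ) < N := lt_of_le_of_lt (le_max_left _ _) hN
  have hN0 : (0:ℝ) < N := zero_lt_one.trans hN1
  set δ := T / N with hδdef
  have hδ : 0 < δ := div_pos hT hN0
  set s : ℕ → ℝ := fun i => i * δ with hs
  have hsmono : ∀ {a b : ℕ}, a ≤ b → s a ≤ s b := by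
    intro a b h
    exact mul_le_mul_of_nonneg_right (by exact_mod_cast h) hδ.le
  have hsnonneg : ∀ i, 0 ≤ s i := fun i => mul_nonneg (Nat.cast_nonneg i) hδ.le
  have hsucc : ∀ i : ℕ, s (i+1) = s i + δ := by
    intro i; simp only [hs]; push_cast; ring
  have hsN : s N = T := by
    simp only [hs, hδdef]
    rw [mul_comm, div_mul_cancel₀ _ (ne_of_gt hN0)]
  set cell : ℕ → Set ℝ := fun i => Ioo (s i) (s (i+1)) with hcell
  have hcellsub : ∀ i, i < N → cell i ⊆ Ioo 0 T := fun i hiN =>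
    Ioo_subset_Ioo (hsnonneg i) (hsN ▸ hsmono hiN)
  set τ : ℕ → ℝ := fun i => s i + δ/2 with hτdef
  have hτ : ∀ i, τ i ∈ cell i := by
    intro i
    constructor
    · simp only [hτdef]; linarith
    · rw [hsucc i]; simp only [hτdef]; linarith
  have hdisj : ∀ {a b : ℕ}, a ≠ b → ∀ {t : ℝ}, t ∈ cell a → t ∉ cell b := by
    have key : ∀ {a b : ℕ}, a < b → ∀ {t : ℝ}, t ∈ cell a → t ∉ cell b := by
      intro a b hab t ht ht'
      have : s (a+1) ≤ s b := hsmono hab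
      exact absurd (ht.2.trans_le this) (not_lt.2 ht'.1.le)
    intro a b hab t ht ht'
    rcases lt_or_gt_of_ne hab with h | h
    · exact key h ht ht'
    · exact key h ht' ht
  -- superadditivity of variation over cells
  have hvar : ∀ (g : ℝ → ℝ) (k : ℕ),
      (∑ i ∈ Finset.range k, eVariationOn g (cell i)) ≤ eVariationOn g (Ioo 0 (s k)) := by
    intro g k
    induction k with
    | zero => simp
    | succ k ih =>
      rw [Finset.sum_range_succ]
      calc ∑ i ∈ Finset.range k, eVariationOn g (cell i) + eVariationOn g (cell k)
          ≤ eVariationOn g (Ioo 0 (s k)) + eVariationOn g (cell k) := add_le_add ih le_rfl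
        _ ≤ eVariationOn g (Ioo 0 (s k) ∪ cell k) :=
            eVariationOn.add_le_union g (fun x hx y hy => (hx.2.trans hy.1).le)
        _ ≤ eVariationOn g (Ioo 0 (s (k+1))) := by
            apply eVariationOn.mono
            apply union_subset
            · exact Ioo_subset_Ioo le_rfl (hsmono k.le_succ)
            · exact Ioo_subset_Ioo (hsnonneg k) le_rfl
  -- approximants
  set val : (Fin n → Bool) → (Fin n → ℝ) := fun b j => if b j then 1 else 0 with hvaldef
  set g : (Fin N → Fin n → Bool) → ℝ → (Fin n → ℝ) :=
    fun c t => ∑ i : Fin N, (cell i).indicator (fun _ => val (c i)) t with hg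
  have hgcell : ∀ c (i : Fin N) (t : ℝ), t ∈ cell i → g c t = val (c i) := by
    intro c i t ht
    simp only [hg]
    rw [Finset.sum_eq_single i]
    · rw [indicator_of_mem ht]
    · intro i' _ hne
      exact indicator_of_notMem (hdisj (fun h : (i:ℕ) = (i':ℕ) => hne (Fin.ext h).symm) ht) _
    · intro h; exact absurd (Finset.mem_univ i) h
  have hgout : ∀ c (t : ℝ), (∀ i : Fin N, t ∉ cell i) → g c t = 0 := by
    intro c t h
    simp only [hg]
    exact Finset.sum_eq_zero (fun i _ => indicator_of_notMem (h i) _)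
  have hg01 : ∀ c (t : ℝ) (j : Fin n), g c t j = 0 ∨ g c t j = 1 := by
    intro c t j
    by_cases h : ∃ i : Fin N, t ∈ cell i
    · obtain ⟨i, hi⟩ := h
      rw [hgcell c i t hi]
      by_cases h' : c i j
      · right; simp [hvaldef, h']
      · left; simp [hvaldef, h']
    · rw [hgout c t (fun i hi => h ⟨i, hi⟩)]
      left; rfl
  have hgmeas : ∀ c, Measurable (g c) := by
    intro c
    apply Finset.measurable_sum
    intro i _
    exact measurable_const.indicator measurableSet_Ioo
  have hgmem : ∀ c, MemLp (g c) p μ := by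
    intro c
    refine MemLp.of_bound (hgmeas c).aestronglyMeasurable 1 (Eventually.of_forall fun t => ?_)
    rw [pi_norm_le_iff_of_nonneg zero_le_one]
    intro j
    rcases hg01 c t j with h | h <;> simp [h]
  refine ⟨Set.range (fun c => ((hgmem c).toLp (g c))), Set.finite_range _, ?_⟩
  intro u hu
  obtain ⟨v, hv, hbin, hvarle⟩ := hD1 u hu
  set c : Fin N → Fin n → Bool := fun i j => if v (τ i) j = 1 then true else false with hcdef
  have hcval : ∀ i : Fin N, val (c i) = v (τ i) := by
    intro i
    funext j
    rcases hbin (τ i) (hcellsub i i.isLt (hτ i)) j with h | h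
    · simp [hvaldef, hcdef, h]
    · simp [hvaldef, hcdef, h]
  set badJ : Fin n → Finset ℕ :=
    fun j => (Finset.range N).filter (fun i => ∃ t ∈ cell i, v t j ≠ v (τ i) j) with hbadJ
  have hcard : ∀ j : Fin n,
      ((badJ j).card : ℝ≥0∞) ≤ eVariationOn (fun t => v t j) (Ioo 0 T) := by
    intro j
    have h1 : ∀ i ∈ badJ j, (1:ℝ≥0∞) ≤ eVariationOn (fun t => v t j) (cell i) := by
      intro i hi
      simp only [hbadJ, Finset.mem_filter, Finset.mem_range] at hi
      obtain ⟨hiN, t, ht, htne⟩ := hi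
      have h01t := hbin t (hcellsub i hiN ht) j
      have h01τ := hbin (τ i) (hcellsub i hiN (hτ i)) j
      have hed : (1:ℝ≥0∞) ≤ edist (v t j) (v (τ i) j) := by
        rcases h01t with h | h <;> rcases h01τ with h' | h'
        · exact absurd (h.trans h'.symm) htne
        · rw [h, h', edist_dist, Real.dist_eq]; norm_num
        · rw [h, h', edist_dist, Real.dist_eq]; norm_num
        · exact absurd (h.trans h'.symm) htne
      exact hed.trans (eVariationOn.edist_le _ ht (hτ i))
    calc ((badJ j).card : ℝ≥0∞) = ∑ _i ∈ badJ j, (1:ℝ≥0∞) := by simp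
      _ ≤ ∑ i ∈ badJ j, eVariationOn (fun t => v t j) (cell i) := Finset.sum_le_sum h1
      _ ≤ ∑ i ∈ Finset.range N, eVariationOn (fun t => v t j) (cell i) :=
          Finset.sum_le_sum_of_subset (Finset.filter_subset _ _)
      _ ≤ eVariationOn (fun t => v t j) (Ioo 0 (s N)) := hvar _ N
      _ = eVariationOn (fun t => v t j) (Ioo 0 T) := by rw [hsN]
  set I : Finset ℕ := (Finset.range N).filter (fun i => ∃ j : Fin n, i ∈ badJ j) with hI
  have hIcard : (I.card : ℝ≥0∞) ≤ ENNReal.ofReal σ := by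
    have hsub : I ⊆ Finset.univ.biUnion (fun j : Fin n => badJ j) := by
      intro i hi
      simp only [hI, Finset.mem_filter] at hi
      obtain ⟨-, j, hj⟩ := hi
      exact Finset.mem_biUnion.2 ⟨j, Finset.mem_univ _, hj⟩
    calc (I.card : ℝ≥0∞) ≤ (((Finset.univ.biUnion fun j : Fin n => badJ j).card : ℕ) : ℝ≥0∞) := by
          exact_mod_cast Finset.card_le_card hsub
      _ ≤ ((∑ j : Fin n, (badJ j).card : ℕ) : ℝ≥0∞) := by exact_mod_cast Finset.card_biUnion_le
      _ = ∑ j : Fin n, ((badJ j).card : ℝ≥0∞) := by push_cast; rfl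
      _ ≤ ∑ j : Fin n, eVariationOn (fun t => v t j) (Ioo 0 T) :=
          Finset.sum_le_sum (fun j _ => hcard j)
      _ ≤ ENNReal.ofReal σ := hvarle
  set B : Set ℝ := (⋃ i ∈ I, cell i) ∪ (⋃ i ∈ Finset.range (N+1), ({s i} : Set ℝ)) with hB
  have hBmeas : MeasurableSet B := by
    apply MeasurableSet.union
    · exact MeasurableSet.biUnion I.countable_toSet (fun i _ => measurableSet_Ioo)
    · exact MeasurableSet.biUnion (Finset.range (N+1)).countable_toSet
        (fun i _ => measurableSet_singleton _)
  have hcellvol : ∀ i : ℕ, volume (cell i) = ENNReal.ofReal δ := by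
    intro i
    simp only [hcell]
    rw [Real.volume_Ioo, hsucc i]
    congr 1; ring
  have hBvol : volume B ≤ ENNReal.ofReal (σ * δ) := by
    calc volume B ≤ volume (⋃ i ∈ I, cell i)
          + volume (⋃ i ∈ Finset.range (N+1), ({s i} : Set ℝ)) := measure_union_le _ _
      _ ≤ (∑ i ∈ I, volume (cell i)) + (∑ i ∈ Finset.range (N+1), volume ({s i} : Set ℝ)) :=
          add_le_add (measure_biUnion_finset_le _ _) (measure_biUnion_finset_le _ _)
      _ = I.card * ENNReal.ofReal δ := by
          simp [hcellvol, Real.volume_singleton, Finset.sum_const, nsmul_eq_mul]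
      _ ≤ ENNReal.ofReal σ * ENNReal.ofReal δ := mul_le_mul_left hIcard _
      _ = ENNReal.ofReal (σ * δ) := (ENNReal.ofReal_mul hσ.le).symm
  have hgood : ∀ t ∈ Ioo (0:ℝ) T, t ∉ B → v t = g c t := by
    intro t ht htB
    set i := ⌊t / δ⌋₊ with hi
    have hiN : i < N := by
      rw [hi, Nat.floor_lt (div_nonneg ht.1.le hδ.le)]
      rw [div_lt_iff₀ hδ]
      calc t < T := ht.2
        _ = s N := hsN.symm
        _ = N * δ := rfl
    have hle : s i ≤ t := by
      have := Nat.floor_le (div_nonneg ht.1.le hδ.le)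
      calc s i = (i:ℝ) * δ := rfl
        _ ≤ (t / δ) * δ := mul_le_mul_of_nonneg_right this hδ.le
        _ = t := div_mul_cancel₀ t hδ.ne'
    have hlt : t < s (i+1) := by
      have := Nat.lt_floor_add_one (t / δ)
      calc t = (t / δ) * δ := (div_mul_cancel₀ t hδ.ne').symm
        _ < ((i:ℝ) + 1) * δ := by
            apply mul_lt_mul_of_pos_right _ hδ
            exact_mod_cast this
        _ = s (i+1) := by simp only [hs]; push_cast; ring
    have hnegrid : s i ≠ t := by
      intro h
      apply htB
      right
      exact mem_iUnion₂.2 ⟨i, by simp [Finset.mem_range]; omega, h ▸ rfl⟩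
    have htcell : t ∈ cell i := ⟨lt_of_le_of_ne hle hnegrid, hlt⟩
    have hiI : i ∉ I := fun hiI => htB (Or.inl (mem_iUnion₂.2 ⟨i, hiI, htcell⟩))
    funext j
    have hnotbad : i ∉ badJ j := fun hj =>
      hiI (Finset.mem_filter.2 ⟨Finset.mem_range.2 hiN, ⟨j, hj⟩⟩)
    have heq : v t j = v (τ i) j := by
      by_contra hne'
      exact hnotbad (Finset.mem_filter.2 ⟨Finset.mem_range.2 hiN, ⟨t, htcell, hne'⟩⟩)
    have : g c t = val (c ⟨i, hiN⟩) := hgcell c ⟨i, hiN⟩ t htcell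
    rw [this, hcval ⟨i, hiN⟩]
    exact heq
  -- the eLpNorm estimate
  have hBμ : μ B ≤ ENNReal.ofReal (σ * δ) := by
    rw [hμ, Measure.restrict_apply hBmeas]
    exact le_trans (measure_mono inter_subset_left) hBvol
  have hbound : ∀ᵐ t ∂μ,
      ‖((u : ℝ → Fin n → ℝ) - g c) t‖ ≤ ‖B.indicator (fun _ => (1:ℝ)) t‖ := by
    filter_upwards [hv, ae_restrict_mem measurableSet_Ioo] with t htv htmem
    rw [Pi.sub_apply, htv]
    by_cases hBt : t ∈ B
    · rw [indicator_of_mem hBt, norm_one]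
      rw [pi_norm_le_iff_of_nonneg zero_le_one]
      intro j
      rcases hbin t htmem j with h | h <;> rcases hg01 c t j with h' | h' <;>
        simp [Pi.sub_apply, h, h', Real.norm_eq_abs] <;> norm_num
    · rw [hgood t htmem hBt]
      simp [hBt]
  have hσδ : σ * δ < ε ^ pr := by
    rw [hδdef, ← mul_div_assoc, div_lt_iff₀ hN0]
    calc σ * T < N * ε ^ pr := by
          rw [← div_lt_iff₀ hεpr] at *
          exact lt_of_le_of_lt (le_max_right 1 _) hN
      _ = ε ^ pr * N := mul_comm _ _
  have key : eLpNorm ((u : ℝ → Fin n → ℝ) - g c) p μ < ENNReal.ofReal ε := by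
    calc eLpNorm ((u : ℝ → Fin n → ℝ) - g c) p μ
        ≤ eLpNorm (B.indicator fun _ => (1:ℝ)) p μ := eLpNorm_mono_ae hbound
      _ = ‖(1:ℝ)‖₊ * μ B ^ (1/pr) := eLpNorm_indicator_const hBmeas hp0 hp
      _ = μ B ^ (1/pr) := by simp
      _ ≤ (ENNReal.ofReal (σ * δ)) ^ (1/pr) :=
          ENNReal.rpow_le_rpow hBμ (by positivity)
      _ < (ENNReal.ofReal (ε ^ pr)) ^ (1/pr) := by
          apply ENNReal.rpow_lt_rpow _ (by positivity)
          rw [ENNReal.ofReal_lt_ofReal_iff hεpr]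
          exact hσδ
      _ = ENNReal.ofReal ε := by
          rw [ENNReal.ofReal_rpow_of_pos hεpr, ← Real.rpow_mul hε.le,
            mul_one_div_cancel hpr.ne', Real.rpow_one]
  refine mem_iUnion₂.2 ⟨(hgmem c).toLp (g c), mem_range_self c, ?_⟩
  rw [Metric.mem_ball, Lp.dist_def]
  have hcoe : ((u : ℝ → Fin n → ℝ) - ((hgmem c).toLp (g c) : ℝ → Fin n → ℝ))
      =ᵐ[μ] ((u : ℝ → Fin n → ℝ) - g c) :=
    EventuallyEq.sub (EventuallyEq.refl _ _) ((hgmem c).coeFn_toLp)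
  rw [eLpNorm_congr_ae hcoe]
  exact ENNReal.toReal_lt_of_lt_ofReal key

/-- existence of a global minimizer of a lower semicontinuous
function over a nonempty set of switching controls satisfying (D1) and (D2). -/
theorem stmt_0
    (T : ℝ) (hT : 0 < T) (n : ℕ) (p : ℝ≥0∞) [Fact (1 ≤ p)] (hp : p ≠ ⊤)
    (σ : ℝ) (hσ : 0 < σ)
    (D : Set (Lp (Fin n → ℝ) p (volume.restrict (Ioo (0:ℝ) T))))
    (hne : D.Nonempty)
    (hD1 : ∀ u ∈ D, ∃ v : ℝ → Fin n → ℝ,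
      ((u : ℝ → Fin n → ℝ) =ᵐ[volume.restrict (Ioo (0:ℝ) T)] v) ∧
      (∀ t ∈ Ioo (0:ℝ) T, ∀ j, v t j = 0 ∨ v t j = 1) ∧
      (∑ j : Fin n, eVariationOn (fun s => v s j) (Ioo (0:ℝ) T)) ≤ ENNReal.ofReal σ)
    (hD2 : IsClosed D)
    (f : Lp (Fin n → ℝ) p (volume.restrict (Ioo (0:ℝ) T)) → ℝ)
    (hf : LowerSemicontinuous f) :
    ∃ u ∈ D, ∀ w ∈ D, f u ≤ f w := by
  have hcomp : IsCompact D :=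
    TotallyBounded.isCompact_of_isClosed (aux_tb T hT n p hp σ hσ D hD1) hD2
  exact lsc_exists_min hcomp hne hf
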